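/- arXiv:1208.5027 — 6 statements merged into one kernel-verified Lean document; each statement's English description precedes it below -/
import Mathlib

section
/- Let U ⊆ ℂ be a nonempty connected open set and I ⊆ ℝ a nonempty open interval. Let ζ : U × I → ℂ be holomorphic in a and differentiable in u. If for all (a,u) ∈ U × I both partial derivatives are purely imaginary, i.e. ∂ζ/∂a(a,u) + conj(∂ζ/∂a(a,u)) = 0 and ∂ζ/∂u(a,u) + conj(∂ζ/∂u(a,u)) = 0, then there exist real constants C₀ and C₁ and a differentiable function G : I → ℝ such that ζ(a,u) = i·(C₀·a + G(u)) + C₁ for all (a,u) ∈ U × I. -/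
open Complex Set

lemma const_of_deriv_zero {F : Type*} [NormedAddCommGroup F] [NormedSpace ℝ F] {f : ℝ → F}
    {s : Set ℝ} (hs : Convex ℝ s) (hso : IsOpen s)
    (hf : ∀ x ∈ s, HasDerivAt f 0 x) {x y : ℝ} (hx : x ∈ s) (hy : y ∈ s) : f x = f y := by
  refine hs.is_const_of_fderivWithin_eq_zero (𝕜 := ℝ)
    (fun z hz => ((hf z hz).differentiableAt).differentiableWithinAt) (fun z hz => ?_) hx hy
  rw [fderivWithin_of_isOpen hso hz]
  have := (hf z hz).hasFDerivAt.fderiv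
  rw [this]; ext; simp

lemma const_of_cderiv_zero {f : ℂ → ℂ} {s : Set ℂ} (hs : Convex ℝ s) (hso : IsOpen s)
    (hf : ∀ x ∈ s, HasDerivAt f 0 x) {x y : ℂ} (hx : x ∈ s) (hy : y ∈ s) : f x = f y := by
  refine hs.is_const_of_fderivWithin_eq_zero (𝕜 := ℂ)
    (fun z hz => ((hf z hz).differentiableAt).differentiableWithinAt) (fun z hz => ?_) hx hy
  rw [fderivWithin_of_isOpen hso hz]
  have := (hf z hz).hasFDerivAt.fderiv
  rw [this]; ext; simp

/-- If `ζ(a,u)` is holomorphic in `a` and differentiable in `u` on a nonempty connected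
open set `U ⊆ ℂ` times a nonempty open interval `I ⊆ ℝ`, and both partial derivatives
are purely imaginary, then `ζ(a,u) = i(C₀ a + G(u)) + C₁`. -/
theorem stmt_0 (U : Set ℂ) (I : Set ℝ) (hUopen : IsOpen U) (hUconn : IsConnected U)
    (hIopen : IsOpen I) (hIne : I.Nonempty) (hIint : I.OrdConnected)
    (ζ ζa ζu : ℂ → ℝ → ℂ)
    (hζa : ∀ a ∈ U, ∀ u ∈ I, HasDerivAt (fun z => ζ z u) (ζa a u) a)
    (hζu : ∀ a ∈ U, ∀ u ∈ I, HasDerivAt (fun t => ζ a t) (ζu a u) u)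
    (him_a : ∀ a ∈ U, ∀ u ∈ I, ζa a u + (starRingEnd ℂ) (ζa a u) = 0)
    (him_u : ∀ a ∈ U, ∀ u ∈ I, ζu a u + (starRingEnd ℂ) (ζu a u) = 0) :
    ∃ (C₀ C₁ : ℝ) (G : ℝ → ℝ), (∀ u ∈ I, DifferentiableAt ℝ G u) ∧
      ∀ a ∈ U, ∀ u ∈ I, ζ a u = Complex.I * ((C₀ : ℂ) * a + (G u : ℂ)) + (C₁ : ℂ) := by
  obtain ⟨a₀, ha₀⟩ := hUconn.nonempty
  obtain ⟨u₀, hu₀⟩ := hIne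
  obtain ⟨r, hr, hball⟩ := Metric.isOpen_iff.mp hUopen a₀ ha₀
  -- real part facts
  have hre_a : ∀ a ∈ U, ∀ u ∈ I, (ζa a u).re = 0 := by
    intro a ha u hu
    have := him_a a ha u hu
    rw [Complex.add_conj] at this
    have h2 : (2 : ℝ) * (ζa a u).re = 0 := by exact_mod_cast this
    linarith
  have hre_u : ∀ a ∈ U, ∀ u ∈ I, (ζu a u).re = 0 := by
    intro a ha u hu
    have := him_u a ha u hu
    rw [Complex.add_conj] at this
    have h2 : (2 : ℝ) * (ζu a u).re = 0 := by exact_mod_cast this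
    linarith
  -- points a₁ = a₀ + r/2, a₂ = a₀ + (r/2)I in U
  have hr2 : (0:ℝ) < r / 2 := by linarith
  set a₁ : ℂ := a₀ + ((r/2 : ℝ) : ℂ) with ha₁def
  set a₂ : ℂ := a₀ + ((r/2 : ℝ) : ℂ) * Complex.I with ha₂def
  have ha₁ : a₁ ∈ U := by
    apply hball
    simp only [Metric.mem_ball, ha₁def, Complex.dist_eq, add_sub_cancel_left]
    rw [Complex.norm_real, Real.norm_eq_abs, abs_of_pos hr2]; linarith
  have ha₂ : a₂ ∈ U := by
    apply hball
    simp only [Metric.mem_ball, ha₂def, Complex.dist_eq, add_sub_cancel_left]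
    rw [norm_mul, Complex.norm_I, mul_one, Complex.norm_real, Real.norm_eq_abs, abs_of_pos hr2]; linarith
  -- ζa is constant in a
  have hdiffable : ∀ u ∈ I, DifferentiableOn ℂ (fun z => ζ z u) U := fun u hu a ha =>
    (hζa a ha u hu).differentiableAt.differentiableWithinAt
  have hKconst : ∀ u ∈ I, ∀ a ∈ U, ζa a u = ζa a₀ u := by
    intro u hu
    have han : AnalyticOnNhd ℂ (fun z => ζ z u) U := (hdiffable u hu).analyticOnNhd hUopen
    have hand : AnalyticOnNhd ℂ (deriv (fun z => ζ z u)) U := han.deriv_of_isOpen hUopen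
    have hdeq : ∀ a ∈ U, deriv (fun z => ζ z u) a = ζa a u := fun a ha => (hζa a ha u hu).deriv
    rcases hand.is_constant_or_isOpen hUconn.isPreconnected with ⟨w, hw⟩ | hopen
    · intro a ha
      rw [← hdeq a ha, hw a ha, ← hw a₀ ha₀, hdeq a₀ ha₀]
    · exfalso
      have himg : IsOpen (deriv (fun z => ζ z u) '' Metric.ball a₀ r) :=
        hopen _ hball Metric.isOpen_ball
      have hmem : deriv (fun z => ζ z u) a₀ ∈ deriv (fun z => ζ z u) '' Metric.ball a₀ r :=
        ⟨a₀, Metric.mem_ball_self hr, rfl⟩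
      obtain ⟨ε, hε, hεball⟩ := Metric.isOpen_iff.mp himg _ hmem
      have hq : deriv (fun z => ζ z u) a₀ + ((ε/2 : ℝ) : ℂ) ∈
          deriv (fun z => ζ z u) '' Metric.ball a₀ r := by
        apply hεball
        simp only [Metric.mem_ball, Complex.dist_eq, add_sub_cancel_left]
        rw [Complex.norm_real, Real.norm_eq_abs, abs_of_pos (by linarith)]; linarith
      obtain ⟨b, hb, hbq⟩ := hq
      have hbU : b ∈ U := hball hb
      have h1 : (ζa b u).re = 0 := hre_a b hbU u hu
      have h2 : (ζa a₀ u).re = 0 := hre_a a₀ ha₀ u hu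
      rw [← hdeq b hbU] at h1
      rw [← hdeq a₀ ha₀] at h2
      rw [hbq] at h1
      simp only [Complex.add_re, Complex.ofReal_re, h2, zero_add] at h1
      linarith
  -- affine formula
  set K : ℝ → ℂ := fun u => ζa a₀ u with hKdef
  set H : ℝ → ℂ := fun u => ζ a₀ u - K u * a₀ with hHdef
  have haffine : ∀ u ∈ I, ∀ a ∈ U, ζ a u = K u * a + H u := by
    intro u hu
    set f : ℂ → ℂ := fun z => ζ z u - K u * z with hfdef
    have hfd : DifferentiableOn ℂ f U :=
      (hdiffable u hu).sub ((differentiable_id.const_mul (K u)).differentiableOn)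
    have hfan : AnalyticOnNhd ℂ f U := hfd.analyticOnNhd hUopen
    have hf0 : ∀ a ∈ U, HasDerivAt f 0 a := by
      intro a ha
      have := (hζa a ha u hu).sub ((hasDerivAt_id a).const_mul (K u))
      simp only [mul_one] at this
      rwa [hKconst u hu a ha, sub_self] at this
    have hev : f =ᶠ[nhds a₀] fun _ => f a₀ := by
      filter_upwards [Metric.ball_mem_nhds a₀ hr] with x hx
      exact const_of_cderiv_zero (convex_ball a₀ r) Metric.isOpen_ball
        (fun z hz => hf0 z (hball hz)) hx (Metric.mem_ball_self hr)
    have heq : EqOn f (fun _ => f a₀) U :=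
      hfan.eqOn_of_preconnected_of_eventuallyEq analyticOnNhd_const
        hUconn.isPreconnected ha₀ hev
    intro a ha
    have := heq ha
    simp only [hfdef] at this
    simp only [hHdef]
    linear_combination this
  -- derivative of K in u
  set Ku : ℝ → ℂ := fun u => (ζu a₁ u - ζu a₀ u) / ((r/2 : ℝ) : ℂ) with hKudef
  have hr2c : (((r/2 : ℝ)) : ℂ) ≠ 0 := by
    exact_mod_cast ne_of_gt hr2
  have hKform : ∀ u ∈ I, K u = (ζ a₁ u - ζ a₀ u) / ((r/2 : ℝ) : ℂ) := by
    intro u hu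
    have h1 := haffine u hu a₁ ha₁
    have h0 := haffine u hu a₀ ha₀
    rw [eq_div_iff hr2c, ha₁def]
    rw [ha₁def] at h1
    linear_combination h0 - h1
  have hKderiv : ∀ u ∈ I, HasDerivAt K (Ku u) u := by
    intro u hu
    have base : HasDerivAt (fun t => (ζ a₁ t - ζ a₀ t) / ((r/2 : ℝ) : ℂ)) (Ku u) u :=
      ((hζu a₁ ha₁ u hu).sub (hζu a₀ ha₀ u hu)).div_const _
    apply base.congr_of_eventuallyEq
    filter_upwards [hIopen.mem_nhds hu] with t ht
    exact hKform t ht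
  have hHderiv : ∀ u ∈ I, HasDerivAt H (ζu a₀ u - Ku u * a₀) u := fun u hu =>
    (hζu a₀ ha₀ u hu).sub ((hKderiv u hu).mul_const a₀)
  -- formula for ζu
  have hζu_eq : ∀ a ∈ U, ∀ u ∈ I, ζu a u = Ku u * a + (ζu a₀ u - Ku u * a₀) := by
    intro a ha u hu
    have hg : HasDerivAt (fun t => K t * a + H t) (Ku u * a + (ζu a₀ u - Ku u * a₀)) u :=
      ((hKderiv u hu).mul_const a).add (hHderiv u hu)
    have hg' : HasDerivAt (fun t => ζ a t) (Ku u * a + (ζu a₀ u - Ku u * a₀)) u := by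
      apply hg.congr_of_eventuallyEq
      filter_upwards [hIopen.mem_nhds hu] with t ht
      exact haffine t ht a ha
    exact (hζu a ha u hu).unique hg'
  -- Ku = 0
  have hKu0 : ∀ u ∈ I, Ku u = 0 := by
    intro u hu
    have hdiffq : ∀ a ∈ U, (Ku u * (a - a₀)).re = 0 := by
      intro a ha
      have h1 := hre_u a ha u hu
      have h0 := hre_u a₀ ha₀ u hu
      rw [hζu_eq a ha u hu] at h1
      have : (Ku u * (a - a₀)).re = (Ku u * a + (ζu a₀ u - Ku u * a₀)).re - (ζu a₀ u).re := by
        simp [Complex.add_re, Complex.sub_re, Complex.mul_re, Complex.sub_im]; ring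
      rw [this, h1, h0]; ring
    have e1 := hdiffq a₁ ha₁
    have e2 := hdiffq a₂ ha₂
    rw [ha₁def, add_sub_cancel_left] at e1
    rw [ha₂def, add_sub_cancel_left] at e2
    simp only [Complex.mul_re, Complex.ofReal_re, Complex.ofReal_im, mul_zero, sub_zero,
      Complex.mul_im, Complex.I_re, Complex.I_im, mul_one, zero_mul, zero_sub, mul_neg] at e1 e2
    have hre : (Ku u).re = 0 := by
      rcases mul_eq_zero.mp e1 with h | h
      · exact h
      · exact absurd h (ne_of_gt hr2)
    have him : (Ku u).im = 0 := by
      have : (Ku u).im * (r/2) = 0 := by nlinarith [e2]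
      rcases mul_eq_zero.mp this with h | h
      · exact h
      · exact absurd h (ne_of_gt hr2)
    exact Complex.ext hre him
  -- K constant on I
  have hKc : ∀ u ∈ I, K u = K u₀ := by
    intro u hu
    exact const_of_deriv_zero hIint.convex hIopen
      (fun t ht => by have := hKderiv t ht; rwa [hKu0 t ht] at this) hu hu₀
  have hKre : (K u₀).re = 0 := hre_a a₀ ha₀ u₀ hu₀
  -- H derivative is ζu a₀ u, purely imaginary
  have hHderiv' : ∀ u ∈ I, HasDerivAt H (ζu a₀ u) u := by
    intro u hu
    have := hHderiv u hu
    rwa [hKu0 u hu, zero_mul, sub_zero] at this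
  -- Re H constant
  have hHre : ∀ u ∈ I, (H u).re = (H u₀).re := by
    intro u hu
    refine const_of_deriv_zero (f := fun t => (H t).re) hIint.convex hIopen
      (fun t ht => ?_) hu hu₀
    have := Complex.reCLM.hasFDerivAt.comp_hasDerivAt t (hHderiv' t ht)
    simp only [Complex.reCLM_apply, Function.comp_def] at this
    rwa [hre_u a₀ ha₀ t ht] at this
  -- conclude
  refine ⟨(K u₀).im, (H u₀).re, fun u => (H u).im, fun u hu => ?_, fun a ha u hu => ?_⟩
  · exact (Complex.imCLM.differentiable.differentiableAt).comp u
      (hHderiv' u hu).differentiableAt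
  · have h1 := haffine u hu a ha
    have hK : K u = Complex.I * ((K u₀).im : ℂ) := by
      rw [hKc u hu]
      have := Complex.re_add_im (K u₀)
      rw [hKre] at this
      rw [← this]; simp [Complex.ofReal_zero]; ring
    have hH : H u = ((H u₀).re : ℂ) + ((H u).im : ℂ) * Complex.I := by
      conv_lhs => rw [← Complex.re_add_im (H u)]
      rw [hHre u hu]
    rw [h1, hK]
    linear_combination hH
end

section
/- Let C₀, C₁ ∈ ℝ with C₀ ≠ 0. For a ∈ ℂ define M(a) = i·C₀·(a − conj a) + 2·C₁ (which is real-valued), and on the set where M(a) ≠ 0 define τ(a) = −exp(conj a − a)/M(a) and α(a) = conj(τ(a))/4 + (i/C₀)·exp(a − conj a). Then there is no nonempty open set U ⊆ {a ∈ ℂ : M(a) ≠ 0} such that |α(a)| = (5/4)·|τ(a)| for all a ∈ U. -/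
open Complex

/-- With `M(a) = iC₀(a - ā) + 2C₁`, `τ(a) = -e^{ā-a}/M(a)` and
`α(a) = τ̄/4 + (i/C₀)e^{a-ā}`, there is no nonempty open subset of `{M ≠ 0}`
on which `|α| = (5/4)|τ|`. -/
theorem stmt_2 (C₀ C₁ : ℝ) (hC₀ : C₀ ≠ 0) (M τ α : ℂ → ℂ)
    (hM : ∀ a : ℂ, M a = Complex.I * (C₀ : ℂ) * (a - (starRingEnd ℂ) a) + 2 * (C₁ : ℂ))
    (hτ : ∀ a : ℂ, M a ≠ 0 → τ a = -Complex.exp ((starRingEnd ℂ) a - a) / M a)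
    (hα : ∀ a : ℂ, M a ≠ 0 →
      α a = (starRingEnd ℂ) (τ a) / 4 + (Complex.I / (C₀ : ℂ)) * Complex.exp (a - (starRingEnd ℂ) a)) :
    ¬ ∃ U : Set ℂ, IsOpen U ∧ U.Nonempty ∧ U ⊆ {a : ℂ | M a ≠ 0} ∧
      ∀ a ∈ U, ‖α a‖ = (5/4) * ‖τ a‖ := by
  rintro ⟨U, hUopen, ⟨a₀, ha₀⟩, hUsub, heq⟩
  set m : ℂ → ℝ := fun a => 2*C₁ - 2*C₀*a.im with hm
  have hMm : ∀ a : ℂ, M a = ((m a : ℝ) : ℂ) := by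
    intro a
    rw [hM]
    simp only [hm]
    apply Complex.ext <;> simp <;> ring
  have key : ∀ a ∈ U, (m a)^2 = 3/2 * C₀^2 := by
    intro a haU
    have hMne : M a ≠ 0 := hUsub haU
    have hmne : m a ≠ 0 := by
      intro h
      apply hMne
      rw [hMm, h]; simp
    have hexp1 : ‖Complex.exp ((starRingEnd ℂ) a - a)‖ = 1 := by
      rw [Complex.norm_exp]
      simp
    have hexp2 : ‖Complex.exp (a - (starRingEnd ℂ) a)‖ = 1 := by
      rw [Complex.norm_exp]
      simp
    have habsτ : ‖τ a‖ = 1 / |m a| := by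
      rw [hτ a hMne, hMm, norm_div, norm_neg, hexp1, Complex.norm_real, Real.norm_eq_abs]
    have hconjτ : (starRingEnd ℂ) (τ a)
        = -Complex.exp (a - (starRingEnd ℂ) a) / ((m a : ℝ) : ℂ) := by
      rw [hτ a hMne, hMm, map_div₀, map_neg, ← Complex.exp_conj]
      simp
    have hαform : α a = Complex.exp (a - (starRingEnd ℂ) a) *
        ((-(1/(4*(m a))) : ℝ) + ((1/C₀ : ℝ)) * Complex.I) := by
      rw [hα a hMne, hconjτ]
      have hmC : ((m a : ℝ) : ℂ) ≠ 0 := by exact_mod_cast hmne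
      have hCC : ((C₀ : ℝ) : ℂ) ≠ 0 := by exact_mod_cast hC₀
      push_cast
      field_simp
    have habsα : ‖α a‖^2 = (1/(4*(m a)))^2 + (1/C₀)^2 := by
      rw [hαform, norm_mul, hexp2, one_mul, Complex.sq_norm]
      rw [Complex.normSq_add_mul_I]
      ring
    have h5 := heq a haU
    have h5sq : ‖α a‖^2 = (5/4)^2 * ‖τ a‖^2 := by
      rw [h5]; ring
    rw [habsα, habsτ] at h5sq
    have habsm : |m a| ≠ 0 := abs_ne_zero.mpr hmne
    have hsq : |m a|^2 = (m a)^2 := _root_.sq_abs _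
    field_simp at h5sq
    have hfact : (m a)^2 * (16*(m a)^2 - 24*C₀^2) = 0 := by linear_combination h5sq - (C₀^2 + 16*(m a)^2) * hsq
    have hm2 : (m a)^2 ≠ 0 := pow_ne_zero _ hmne
    rcases mul_eq_zero.mp hfact with h | h
    · exact absurd h hm2
    · linear_combination h / 16
  obtain ⟨ε, hε, hball⟩ := Metric.isOpen_iff.mp hUopen a₀ ha₀
  have hmem : ∀ t : ℝ, |t| < ε → a₀ + (t : ℂ) * Complex.I ∈ U := by
    intro t ht
    apply hball
    rw [Metric.mem_ball, Complex.dist_eq]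
    simpa using ht
  have hmt : ∀ t : ℝ, m (a₀ + (t : ℂ) * Complex.I) = m a₀ - 2*C₀*t := by
    intro t
    simp [hm]
    ring
  have h1 : (m a₀)^2 = 3/2 * C₀^2 := key a₀ ha₀
  have h2 : (m a₀ - 2*C₀*(ε/4))^2 = 3/2 * C₀^2 := by
    rw [← hmt (ε/4)]
    exact key _ (hmem (ε/4) (by rw [abs_of_pos (by linarith)]; linarith))
  have h3 : (m a₀ - 2*C₀*(ε/2))^2 = 3/2 * C₀^2 := by
    rw [← hmt (ε/2)]
    exact key _ (hmem (ε/2) (by rw [abs_of_pos (by linarith)]; linarith))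
  have hzero : C₀^2 * ε^2 = 0 := by linear_combination (-4)*h2 + 2*h3 + 2*h1
  have : C₀ * ε ≠ 0 := mul_ne_zero hC₀ (ne_of_gt hε)
  apply this
  nlinarith [sq_nonneg (C₀*ε)]
end

section
/- Let U ⊆ ℂ be a nonempty connected open set and let ζ : U → ℂ be holomorphic with ζ'(a) ≠ 0 for all a ∈ U. Then for every θ ∈ ℝ it is not the case that ((1 + 5·exp(i·θ))/4)·conj(ζ'(a)) = ζ(a) + conj(ζ(a)) for all a ∈ U. -/
open Complex

/-- If `ζ` is holomorphic on a nonempty connected open `U ⊆ ℂ` with nonvanishing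
derivative, then for no `θ ∈ ℝ` does `((1 + 5e^{iθ})/4)·conj(ζ'(a)) = ζ(a) + conj(ζ(a))`
hold on all of `U`. -/
theorem stmt_3 (U : Set ℂ) (hUopen : IsOpen U) (hUconn : IsConnected U)
    (ζ ζ' : ℂ → ℂ)
    (hζ : ∀ a ∈ U, HasDerivAt ζ (ζ' a) a)
    (hζ' : ∀ a ∈ U, ζ' a ≠ 0) :
    ∀ θ : ℝ, ¬ (∀ a ∈ U,
      ((1 + 5 * Complex.exp (Complex.I * (θ : ℂ))) / 4) * (starRingEnd ℂ) (ζ' a)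
        = ζ a + (starRingEnd ℂ) (ζ a)) := by
  intro θ heq
  set c : ℂ := (1 + 5 * Complex.exp (Complex.I * (θ : ℂ))) / 4 with hc_def
  have habs : ‖(Complex.exp (Complex.I * (θ : ℂ)))‖ = 1 := by
    rw [Complex.norm_exp]
    simp
  have hc : c ≠ 0 := by
    intro h0
    have h1 : (1 : ℂ) + 5 * Complex.exp (Complex.I * (θ : ℂ)) = 0 := by
      rw [hc_def] at h0
      simpa using h0
    have h2 : Complex.exp (Complex.I * (θ : ℂ)) = -1/5 := by
      field_simp at h1 ⊢
      linear_combination h1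
    rw [h2] at habs
    norm_num [map_div₀] at habs
  -- ζ is analytic on U
  have hdiff : DifferentiableOn ℂ ζ U := fun a ha =>
    (hζ a ha).differentiableAt.differentiableWithinAt
  have hanal : AnalyticOnNhd ℂ ζ U := hdiff.analyticOnNhd hUopen
  have hderiv_eq : ∀ a ∈ U, deriv ζ a = ζ' a := fun a ha => (hζ a ha).deriv
  have hanal' : AnalyticOnNhd ℂ (deriv ζ) U := hanal.deriv
  -- the function h = conj c * deriv ζ is real-valued on U
  have hanal_h : AnalyticOnNhd ℂ (fun a => (starRingEnd ℂ) c * deriv ζ a) U :=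
    fun a ha => analyticAt_const.mul (hanal' a ha)
  have hreal : ∀ a ∈ U, (starRingEnd ℂ) c * deriv ζ a = ((2 * (ζ a).re : ℝ) : ℂ) := by
    intro a ha
    have := heq a ha
    have h2 : (starRingEnd ℂ) c * ζ' a = (starRingEnd ℂ) (ζ a) + ζ a := by
      have := congrArg (starRingEnd ℂ) this
      simpa using this
    rw [hderiv_eq a ha, h2]
    rw [add_comm, Complex.add_conj]
    try push_cast
    try ring
  -- open mapping theorem: h is constant or open
  rcases hanal_h.is_constant_or_isOpen hUconn.isPreconnected with ⟨v, hv⟩ | hopen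
  · -- constant case
    obtain ⟨a₀, ha₀⟩ := hUconn.nonempty
    set k : ℂ := ζ' a₀ with hk_def
    have hk0 : k ≠ 0 := hζ' a₀ ha₀
    -- real part of ζ is constant on U
    have hre : ∀ a ∈ U, (ζ a).re = v.re / 2 := by
      intro a ha
      have h1 := (hreal a ha).symm.trans (hv a ha)
      have := congrArg Complex.re h1
      simp at this
      linarith
    -- derivative of re ∘ ζ along any direction vanishes
    have key : ∀ w : ℂ, (w * k).re = 0 := by
      intro w
      have hL : HasDerivAt (fun t : ℝ => a₀ + (t : ℂ) * w) w 0 := by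
        have h1 : HasDerivAt (fun t : ℝ => (t : ℂ)) 1 0 := by
          have := Complex.ofRealCLM.hasDerivAt (x := (0 : ℝ))
          simp only [Complex.ofRealCLM_apply, Complex.ofReal_one] at this
          exact this
        simpa using (h1.mul_const w).const_add a₀
      have hζa₀ : HasDerivAt ζ k (a₀ + ((0:ℝ) : ℂ) * w) := by simpa using hζ a₀ ha₀
      have hcomp : HasDerivAt (fun t : ℝ => ζ (a₀ + (t : ℂ) * w)) (w * k) 0 := by
        have := (hζa₀.hasFDerivAt.restrictScalars ℝ).comp_hasDerivAt 0 hL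
        simp only [ContinuousLinearMap.coe_restrictScalars'] at this
        exact this
      have hre' : HasDerivAt (fun t : ℝ => (ζ (a₀ + (t : ℂ) * w)).re) (w * k).re 0 :=
        (Complex.reCLM.hasFDerivAt.comp_hasDerivAt 0 hcomp)
      -- but this function is eventually constant
      have hev : (fun t : ℝ => (ζ (a₀ + (t : ℂ) * w)).re) =ᶠ[nhds (0 : ℝ)]
          (fun _ => v.re / 2) := by
        have hcont : Continuous (fun t : ℝ => a₀ + (t : ℂ) * w) :=
          continuous_const.add ((Complex.continuous_ofReal).mul continuous_const)
        have hmem : ∀ᶠ t : ℝ in nhds 0, a₀ + (t : ℂ) * w ∈ U := by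
          have : a₀ + ((0 : ℝ) : ℂ) * w ∈ U := by simpa using ha₀
          exact hcont.continuousAt.eventually_mem (hUopen.mem_nhds this)
        filter_upwards [hmem] with t ht
        exact hre _ ht
      have hconst : HasDerivAt (fun t : ℝ => (ζ (a₀ + (t : ℂ) * w)).re) 0 0 :=
        (hasDerivAt_const (0 : ℝ) (v.re / 2)).congr_of_eventuallyEq hev
      exact hre'.unique hconst
    have h1 : k.re = 0 := by simpa using key 1
    have h2 : k.im = 0 := by
      have := key Complex.I
      simp [Complex.mul_re] at this
      simpa using this
    exact hk0 (Complex.ext h1 h2)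
  · -- open case: image of U is open, nonempty, contained in ℝ — impossible
    have himg : IsOpen ((fun a => (starRingEnd ℂ) c * deriv ζ a) '' U) :=
      hopen U le_rfl hUopen
    obtain ⟨a₀, ha₀⟩ := hUconn.nonempty
    set z₀ : ℂ := (starRingEnd ℂ) c * deriv ζ a₀ with hz₀
    have hz₀mem : z₀ ∈ (fun a => (starRingEnd ℂ) c * deriv ζ a) '' U := ⟨a₀, ha₀, rfl⟩
    obtain ⟨ε, hε, hball⟩ := Metric.isOpen_iff.mp himg z₀ hz₀mem
    have hmem : z₀ + (ε / 2) * Complex.I ∈ (fun a => (starRingEnd ℂ) c * deriv ζ a) '' U := by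
      apply hball
      simp only [Metric.mem_ball, Complex.dist_eq]
      have habs2 : ‖((ε : ℂ) / 2 * Complex.I)‖ = ε / 2 := by
        simp [map_div₀, abs_of_pos hε]
      simp only [add_sub_cancel_left]
      rw [habs2]; linarith
    obtain ⟨a, haU, ha⟩ := hmem
    have ha' : (starRingEnd ℂ) c * deriv ζ a = z₀ + (ε : ℂ) / 2 * Complex.I := ha
    have h1 : ((starRingEnd ℂ) c * deriv ζ a).im = 0 := by
      rw [hreal a haU]; simp
    rw [ha'] at h1
    have h2 : z₀.im = 0 := by
      rw [hz₀, hreal a₀ ha₀]; simp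
    simp [Complex.add_im, h2] at h1
    linarith
end

section
/- Let U ⊆ ℂ be a nonempty connected open set and I ⊆ ℝ a nonempty open interval. Let ζ : U × I → ℂ be holomorphic in a and differentiable in u, such that for each a ∈ U the map u ↦ ∂ζ/∂a(a,u) is differentiable. If ∂/∂u(∂ζ/∂a)(a,u) = 0 for all (a,u) ∈ U × I and ∂ζ/∂u(a,u) + conj(∂ζ/∂u(a,u)) = 0 for all (a,u) ∈ U × I, then there exist a holomorphic function Z : U → ℂ, a differentiable function F₃ : I → ℝ, and a real constant C such that ζ(a,u) = Z(a) + i·F₃(u) + C for all (a,u) ∈ U × I. -/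
open Complex

/-- A function with zero derivative on a convex set is constant there. -/
lemma aux_const_of_deriv_zero_convex {𝕜 : Type*} [RCLike 𝕜] {E : Type*}
    [NormedAddCommGroup E] [NormedSpace 𝕜 E] {s : Set 𝕜} [NormedSpace ℝ E]
    (hs : Convex ℝ s) (hso : IsOpen s) {f : 𝕜 → E} {f' : 𝕜 → E}
    (hf : ∀ x ∈ s, HasDerivAt f (f' x) x) (hf' : ∀ x ∈ s, f' x = 0)
    {x y : 𝕜} (hx : x ∈ s) (hy : y ∈ s) : f x = f y := by
  apply hs.is_const_of_fderivWithin_eq_zero (𝕜 := 𝕜)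
    (fun v hv => (hf v hv).differentiableAt.differentiableWithinAt) _ hx hy
  intro v hv
  rw [fderivWithin_of_isOpen hso hv]
  have h := (hf v hv).hasFDerivAt.fderiv
  rw [h, hf' v hv]
  ext
  simp

/-- A function with zero derivative on an open preconnected set of `ℂ` is constant there. -/
lemma aux_const_of_deriv_zero_preconnected {s : Set ℂ} (hso : IsOpen s)
    (hsc : IsPreconnected s) {f : ℂ → ℂ}
    (hf : ∀ a ∈ s, HasDerivAt f 0 a) {x y : ℂ} (hx : x ∈ s) (hy : y ∈ s) : f x = f y := by
  haveI : PreconnectedSpace s := Subtype.preconnectedSpace hsc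
  have hlc : IsLocallyConstant (fun z : s => f z) := by
    rw [IsLocallyConstant.iff_eventually_eq]
    intro z
    obtain ⟨ε, hε, hball⟩ := Metric.isOpen_iff.1 hso z z.2
    have hconst : ∀ w ∈ Metric.ball (z : ℂ) ε, f w = f z := fun w hw =>
      aux_const_of_deriv_zero_convex (f' := fun _ => (0 : ℂ)) (convex_ball _ _)
        Metric.isOpen_ball (fun v hv => hf v (hball hv)) (fun _ _ => rfl)
        hw (Metric.mem_ball_self hε)
    have hmem : (Subtype.val : s → ℂ) ⁻¹' Metric.ball (z : ℂ) ε ∈ nhds z :=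
      continuous_subtype_val.continuousAt.preimage_mem_nhds
        (Metric.ball_mem_nhds _ hε)
    filter_upwards [hmem] with w hw
    exact hconst w hw
  exact hlc.apply_eq_of_preconnectedSpace ⟨x, hx⟩ ⟨y, hy⟩

/-- Case 3 of Lemma 4: if `ζ_{,au} = 0` and `ζ_{,u} + conj(ζ_{,u}) = 0` on `U × I`,
then `ζ(a,u) = Z(a) + iF₃(u) + C` with `Z` holomorphic on `U` and `F₃` real differentiable. -/
theorem stmt_6 (U : Set ℂ) (I : Set ℝ) (hUopen : IsOpen U) (hUconn : IsConnected U)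
    (hIopen : IsOpen I) (hIne : I.Nonempty) (hIint : I.OrdConnected)
    (ζ ζa ζu ζau : ℂ → ℝ → ℂ)
    (hζa : ∀ a ∈ U, ∀ u ∈ I, HasDerivAt (fun z => ζ z u) (ζa a u) a)
    (hζu : ∀ a ∈ U, ∀ u ∈ I, HasDerivAt (fun t => ζ a t) (ζu a u) u)
    (hζau : ∀ a ∈ U, ∀ u ∈ I, HasDerivAt (fun t => ζa a t) (ζau a u) u)
    (h1 : ∀ a ∈ U, ∀ u ∈ I, ζau a u = 0)
    (h2 : ∀ a ∈ U, ∀ u ∈ I, ζu a u + (starRingEnd ℂ) (ζu a u) = 0) :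
    ∃ (Z : ℂ → ℂ), (∀ a ∈ U, DifferentiableAt ℂ Z a) ∧
      ∃ (F₃ : ℝ → ℝ), (∀ u ∈ I, DifferentiableAt ℝ F₃ u) ∧
        ∃ (C : ℝ), ∀ a ∈ U, ∀ u ∈ I, ζ a u = Z a + Complex.I * (F₃ u : ℂ) + (C : ℂ) := by
  obtain ⟨u₀, hu₀⟩ := hIne
  obtain ⟨a₀, ha₀⟩ := hUconn.nonempty
  have hIconv : Convex ℝ I := convex_iff_ordConnected.2 hIint
  -- ζa is constant in u
  have hζa_const : ∀ a ∈ U, ∀ u ∈ I, ζa a u = ζa a u₀ := fun a ha u hu =>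
    aux_const_of_deriv_zero_convex hIconv hIopen (hζau a ha) (h1 a ha) hu hu₀
  -- for each u, a ↦ ζ a u - ζ a u₀ has zero derivative on U
  have key : ∀ u ∈ I, ∀ a ∈ U, ζ a u - ζ a u₀ = ζ a₀ u - ζ a₀ u₀ := by
    intro u hu a ha
    have hz : ∀ b ∈ U, HasDerivAt (fun z => ζ z u - ζ z u₀) 0 b := by
      intro b hb
      have := (hζa b hb u hu).sub (hζa b hb u₀ hu₀)
      rwa [hζa_const b hb u hu, sub_self] at this
    exact aux_const_of_deriv_zero_preconnected hUopen hUconn.isPreconnected hz ha ha₀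
  -- real part of ζ a₀ u is constant in u
  have hre : ∀ u ∈ I, (ζ a₀ u).re = (ζ a₀ u₀).re := by
    intro u hu
    have hd : ∀ t ∈ I, HasDerivAt (fun t => (ζ a₀ t).re) ((ζu a₀ t).re) t := by
      intro t ht
      have h := (Complex.reCLM.hasFDerivAt.comp t (hζu a₀ ha₀ t ht).hasFDerivAt)
      have h2' := h.hasDerivAt
      simp at h2'
      exact h2'
    have hz : ∀ t ∈ I, (ζu a₀ t).re = 0 := by
      intro t ht
      have := h2 a₀ ha₀ t ht
      have h3 : (ζu a₀ t).re + (ζu a₀ t).re = 0 := by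
        have hc := congrArg Complex.re this
        simpa using hc
      linarith
    exact aux_const_of_deriv_zero_convex hIconv hIopen hd hz hu hu₀
  refine ⟨fun a => ζ a u₀, fun a ha => (hζa a ha u₀ hu₀).differentiableAt,
    fun u => (ζ a₀ u).im - (ζ a₀ u₀).im, ?_, 0, ?_⟩
  · intro u hu
    have : DifferentiableAt ℝ (fun t => (ζ a₀ t).im) u :=
      (Complex.imCLM.differentiable.differentiableAt).comp u
        (hζu a₀ ha₀ u hu).differentiableAt
    exact this.sub_const _
  · intro a ha u hu
    have hk := key u hu a ha
    have hreu := hre u hu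
    have : ζ a₀ u - ζ a₀ u₀ = Complex.I * (((ζ a₀ u).im - (ζ a₀ u₀).im : ℝ) : ℂ) := by
      apply Complex.ext <;> simp [hreu]
    push_cast at this ⊢
    linear_combination hk + this
end

section
/- Let U ⊆ ℂ be a nonempty connected open set and I ⊆ ℝ a nonempty open interval. Let ζ : U × I → ℂ be such that both a ↦ ∂²ζ/∂a²(a,u) and a ↦ ∂²ζ/∂a∂u(a,u) are holomorphic on U for each u ∈ I, with ∂²ζ/∂a²(a,u) ≠ 0 for all (a,u) ∈ U × I. If conj(∂²ζ/∂a²(a,u))·(∂²ζ/∂a∂u(a,u)) − conj(∂²ζ/∂a∂u(a,u))·(∂²ζ/∂a²(a,u)) = 0 for all (a,u) ∈ U × I, then there exists a function F₅ : I → ℝ such that ∂²ζ/∂a∂u(a,u) = F₅(u)·∂²ζ/∂a²(a,u) for all (a,u) ∈ U × I. -/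
open Complex

/-- Key step of Case 4 of Lemma 4: if `ζ_{,aa}` and `ζ_{,au}` are holomorphic in `a`,
`ζ_{,aa} ≠ 0`, and `conj(ζ_{,aa})ζ_{,au} - conj(ζ_{,au})ζ_{,aa} = 0` on `U × I`,
then `ζ_{,au} = F₅(u)·ζ_{,aa}` for a real-valued function `F₅` of `u` alone. -/
theorem stmt_7 (U : Set ℂ) (I : Set ℝ) (hUopen : IsOpen U) (hUconn : IsConnected U)
    (hIopen : IsOpen I) (hIne : I.Nonempty) (hIint : I.OrdConnected)
    (ζ ζa ζaa ζau : ℂ → ℝ → ℂ)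
    (hζa : ∀ a ∈ U, ∀ u ∈ I, HasDerivAt (fun z => ζ z u) (ζa a u) a)
    (hζaa : ∀ a ∈ U, ∀ u ∈ I, HasDerivAt (fun z => ζa z u) (ζaa a u) a)
    (hζau : ∀ a ∈ U, ∀ u ∈ I, HasDerivAt (fun t => ζa a t) (ζau a u) u)
    (holo_aa : ∀ u ∈ I, ∀ a ∈ U, DifferentiableAt ℂ (fun z => ζaa z u) a)
    (holo_au : ∀ u ∈ I, ∀ a ∈ U, DifferentiableAt ℂ (fun z => ζau z u) a)
    (hne : ∀ a ∈ U, ∀ u ∈ I, ζaa a u ≠ 0)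
    (hwedge : ∀ a ∈ U, ∀ u ∈ I,
      (starRingEnd ℂ) (ζaa a u) * ζau a u - (starRingEnd ℂ) (ζau a u) * ζaa a u = 0) :
    ∃ F₅ : ℝ → ℝ, ∀ a ∈ U, ∀ u ∈ I, ζau a u = (F₅ u : ℂ) * ζaa a u := by
  obtain ⟨a₀, ha₀⟩ := hUconn.nonempty
  refine ⟨fun u => (ζau a₀ u / ζaa a₀ u).re, fun a ha u hu => ?_⟩
  set g : ℂ → ℂ := fun z => ζau z u / ζaa z u with hg
  -- g is real-valued on U
  have hreal : ∀ z ∈ U, (starRingEnd ℂ) (g z) = g z := by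
    intro z hz
    have hw := hwedge z hz u hu
    have h1 : ζaa z u ≠ 0 := hne z hz u hu
    have h2 : (starRingEnd ℂ) (ζaa z u) ≠ 0 := by
      simpa using h1
    simp only [hg, map_div₀]
    rw [div_eq_div_iff h2 h1]
    linear_combination -hw
  -- g is analytic on U
  have hanal : AnalyticOnNhd ℂ g U := by
    apply DifferentiableOn.analyticOnNhd _ hUopen
    intro z hz
    exact ((holo_au u hu z hz).div (holo_aa u hu z hz) (hne z hz u hu)).differentiableWithinAt
  -- g is constant on U by the open mapping theorem
  have hconst : ∀ z ∈ U, g z = g a₀ := by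
    rcases hanal.is_constant_or_isOpen hUconn.isPreconnected with ⟨w, hw⟩ | hopen
    · intro z hz; rw [hw z hz, hw a₀ ha₀]
    · exfalso
      have hopenU : IsOpen (g '' U) := hopen U le_rfl hUopen
      have hmem : g a₀ ∈ g '' U := ⟨a₀, ha₀, rfl⟩
      obtain ⟨ε, hε, hball⟩ := Metric.isOpen_iff.mp hopenU _ hmem
      have hpt : g a₀ + (ε / 2) * Complex.I ∈ Metric.ball (g a₀) ε := by
        rw [Metric.mem_ball, dist_eq_norm, add_sub_cancel_left]
        have h3 : ((ε : ℂ) / 2 * Complex.I) = (((ε / 2 : ℝ)) : ℂ) * Complex.I := by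
          push_cast; ring
        rw [h3, norm_mul, Complex.norm_real, Complex.norm_I, mul_one,
          Real.norm_eq_abs, abs_of_pos (by linarith)]
        linarith
      obtain ⟨z, hz, hzeq⟩ := hball hpt
      have him : (g z).im = 0 := by
        have h := congrArg Complex.im (hreal z hz)
        simp at h
        linarith
      have him0 : (g a₀).im = 0 := by
        have h := congrArg Complex.im (hreal a₀ ha₀)
        simp at h
        linarith
      rw [hzeq] at him
      simp [him0] at him
      linarith
  have hz : g a = g a₀ := hconst a ha
  have hrealv : (starRingEnd ℂ) (g a₀) = g a₀ := hreal a₀ ha₀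
  have hre : (g a₀ : ℂ) = ((g a₀).re : ℂ) :=
    (Complex.conj_eq_iff_re.mp hrealv).symm
  have h1 : ζaa a u ≠ 0 := hne a ha u hu
  have : ζau a u = g a₀ * ζaa a u := by
    rw [← hz]; simp only [hg]; rw [div_mul_cancel₀ _ h1]
  rw [this, hre]
end

section
/- Let I ⊆ ℝ be a nonempty open interval, C₀ ∈ ℝ, and let F_x, F_y, R : I → ℝ be differentiable with F_y(u) > 0 for all u ∈ I. Suppose that for all u ∈ I: (R(u) + (C₀/4)·F_y(u))·F_x'(u) − R'(u)·F_x(u) = 0, (R(u) + (C₀/4)·F_y(u))·F_y'(u) − R'(u)·F_y(u) = 0, and F_y(u)·F_x'(u) − F_y'(u)·F_x(u) = 0. Then there exist real constants C₂ and C₃ such that F_x(u) = C₂·F_y(u) and R(u) = (C₃ + (C₀/4)·ln(F_y(u)))·F_y(u) for all u ∈ I. -/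
lemma const_of_hasDerivAt_zero {s : Set ℝ} (hs : Convex ℝ s) {g : ℝ → ℝ}
    (hg : ∀ x ∈ s, HasDerivAt g 0 x) {x y : ℝ} (hx : x ∈ s) (hy : y ∈ s) : g x = g y := by
  have h := hs.norm_image_sub_le_of_norm_hasDerivWithin_le
    (fun z hz => (hg z hz).hasDerivWithinAt) (C := 0) (fun z hz => by simp) hx hy
  simp only [zero_mul] at h
  have : g y - g x = 0 := by simpa using norm_le_zero_iff.mp h
  linarith

/-- Solution of the wedge-product ODE system in the branch `F_y ≠ 0`:
`F_x = C₂·F_y` and `R = (C₃ + (C₀/4)·ln F_y)·F_y`. -/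
theorem stmt_10 (I : Set ℝ) (hIopen : IsOpen I) (hIne : I.Nonempty) (hIint : I.OrdConnected)
    (C₀ : ℝ) (Fx Fy R Fx' Fy' R' : ℝ → ℝ)
    (hFx : ∀ u ∈ I, HasDerivAt Fx (Fx' u) u)
    (hFy : ∀ u ∈ I, HasDerivAt Fy (Fy' u) u)
    (hR : ∀ u ∈ I, HasDerivAt R (R' u) u)
    (hFypos : ∀ u ∈ I, 0 < Fy u)
    (h1 : ∀ u ∈ I, (R u + (C₀/4) * Fy u) * Fx' u - R' u * Fx u = 0)
    (h2 : ∀ u ∈ I, (R u + (C₀/4) * Fy u) * Fy' u - R' u * Fy u = 0)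
    (h3 : ∀ u ∈ I, Fy u * Fx' u - Fy' u * Fx u = 0) :
    ∃ C₂ C₃ : ℝ, ∀ u ∈ I,
      Fx u = C₂ * Fy u ∧ R u = (C₃ + (C₀/4) * Real.log (Fy u)) * Fy u := by
  obtain ⟨u₀, hu₀⟩ := hIne
  have hconv : Convex ℝ I := convex_iff_ordConnected.mpr hIint
  have hne : ∀ u ∈ I, Fy u ≠ 0 := fun u hu => (hFypos u hu).ne'
  -- g = Fx / Fy is constant
  have hg : ∀ u ∈ I, HasDerivAt (fun u => Fx u / Fy u) 0 u := by
    intro u hu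
    have := (hFx u hu).div (hFy u hu) (hne u hu)
    refine this.congr_deriv (Eq.symm ?_)
    symm
    rw [div_eq_zero_iff]
    left
    linear_combination h3 u hu
  -- h = R / Fy - (C₀/4) log Fy is constant
  have hh : ∀ u ∈ I, HasDerivAt (fun u => R u / Fy u - (C₀/4) * Real.log (Fy u)) 0 u := by
    intro u hu
    have hd := ((hR u hu).div (hFy u hu) (hne u hu)).sub
      (((hFy u hu).log (hne u hu)).const_mul (C₀/4))
    refine hd.congr_deriv (Eq.symm ?_)
    have hfy := hne u hu
    field_simp
    linear_combination 4 * h2 u hu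
  refine ⟨Fx u₀ / Fy u₀, R u₀ / Fy u₀ - (C₀/4) * Real.log (Fy u₀), fun u hu => ?_⟩
  have e1 : Fx u / Fy u = Fx u₀ / Fy u₀ := const_of_hasDerivAt_zero hconv hg hu hu₀
  have e2 : R u / Fy u - (C₀/4) * Real.log (Fy u)
      = R u₀ / Fy u₀ - (C₀/4) * Real.log (Fy u₀) := const_of_hasDerivAt_zero hconv hh hu hu₀
  constructor
  · rw [← e1, div_mul_cancel₀ _ (hne u hu)]
  · have h4 : R u / Fy u = (R u₀ / Fy u₀ - C₀/4 * Real.log (Fy u₀)) + C₀/4 * Real.log (Fy u) := by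
      linarith [e2]
    rw [div_eq_iff (hne u hu)] at h4
    linear_combination h4
end
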